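/- Let k ≥ 1, let A be a real m × d matrix, and let E : ℝ^m → ℝ^d be a function whose values are all k-sparse vectors and which satisfies E(A f) = f for every k-sparse vector f ∈ ℝ^d. Then every set of at most 2k columns of A is linearly independent; equivalently, spark(A) > 2k. -/

import Mathlib

/-- The round-trip property implies that every set of at most `2k` columns
of `A` is linearly independent, i.e. `spark(A) > 2k`. -/
theorem roundtrip_implies_spark_gt (k m d : ℕ) (hk : 1 ≤ k)
    (A : Matrix (Fin m) (Fin d) ℝ) (E : (Fin m → ℝ) → (Fin d → ℝ))
    (hE : ∀ x : Fin m → ℝ, (Function.support (E x)).ncard ≤ k)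
    (hrt : ∀ f : Fin d → ℝ, (Function.support f).ncard ≤ k → E (A.mulVec f) = f) :
    ∀ S : Finset (Fin d), S.card ≤ 2 * k →
      LinearIndependent ℝ (fun j : S => (fun i => A i j : Fin m → ℝ)) := by
  intro S hS
  rw [Fintype.linearIndependent_iff]
  intro c hc j0
  set h : Fin d → ℝ := fun j => if hj : j ∈ S then c ⟨j, hj⟩ else 0 with hh
  have hAh : A.mulVec h = 0 := by
    funext i
    have hci := congrFun hc i
    simp only [Finset.sum_apply, Pi.smul_apply, smul_eq_mul, Pi.zero_apply] at hci
    have : A.mulVec h i = ∑ j : S, c j * A i (j : Fin d) := by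
      simp only [Matrix.mulVec, dotProduct]
      rw [← Finset.sum_subset (Finset.subset_univ S)
        (by intro x _ hx; simp [hh, hx])]
      rw [← Finset.sum_attach S (fun j => A i j * h j)]
      apply Finset.sum_congr rfl
      intro x _
      simp [hh, x.2, mul_comm]
    rw [this, hci]; rfl
  -- support finset of h
  set s : Finset (Fin d) := Finset.univ.filter (fun j => h j ≠ 0) with hs
  have hsS : s ⊆ S := by
    intro x hx
    simp only [hs, Finset.mem_filter] at hx
    by_contra hxS
    exact hx.2 (by simp [hh, hxS])
  have hscard : s.card ≤ 2 * k := le_trans (Finset.card_le_card hsS) hS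
  obtain ⟨t, hts, htcard⟩ := Finset.exists_subset_card_eq (s := s) (n := min k s.card) (min_le_right _ _)
  set f : Fin d → ℝ := fun j => if j ∈ t then h j else 0 with hf
  set g : Fin d → ℝ := fun j => if j ∈ t then 0 else -h j with hg
  have hfg : f - g = h := by
    funext j
    by_cases hj : j ∈ t <;> simp [hf, hg, hj]
  have hsupf : (Function.support f).ncard ≤ k := by
    have : Function.support f ⊆ ↑t := by
      intro x hx
      by_contra hxt
      rw [Finset.mem_coe] at hxt
      simp only [hf, Function.mem_support, if_neg hxt] at hx
      exact hx rfl
    calc (Function.support f).ncard ≤ (↑t : Set (Fin d)).ncard :=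
          Set.ncard_le_ncard this (Set.finite_coe_iff.mp (by infer_instance))
      _ = t.card := Set.ncard_coe_finset t
      _ ≤ k := by omega
  have hsupg : (Function.support g).ncard ≤ k := by
    have : Function.support g ⊆ ↑(s \ t) := by
      intro x hx
      simp only [hg, Function.mem_support] at hx
      by_cases hxt : x ∈ t
      · simp [hxt] at hx
      · simp only [hxt, if_false, ne_eq, neg_eq_zero] at hx
        simp only [Finset.coe_sdiff, Set.mem_diff, Finset.mem_coe]
        exact ⟨by simp [hs, hx], hxt⟩
    calc (Function.support g).ncard ≤ (↑(s \ t) : Set (Fin d)).ncard :=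
          Set.ncard_le_ncard this (Set.finite_coe_iff.mp (by infer_instance))
      _ = (s \ t).card := Set.ncard_coe_finset _
      _ ≤ k := by rw [Finset.card_sdiff_of_subset hts]; omega
  have hAfg : A.mulVec f = A.mulVec g := by
    have : A.mulVec f - A.mulVec g = 0 := by
      rw [← Matrix.mulVec_sub, hfg, hAh]
    exact sub_eq_zero.mp this
  have hfeqg : f = g := by
    calc f = E (A.mulVec f) := (hrt f hsupf).symm
      _ = E (A.mulVec g) := by rw [hAfg]
      _ = g := hrt g hsupg
  have hh0 : ∀ j, h j = 0 := by
    intro j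
    have := congrFun hfeqg j
    by_cases hj : j ∈ t
    · simpa [hf, hg, hj] using this
    · have : (0 : ℝ) = -h j := by simpa [hf, hg, hj] using this
      linarith
  have := hh0 j0
  simpa [hh, j0.2] using this
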